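/- Let A be an admissible domain. Then there exists a constant C > 0 depending only on d_A such that for all N ∈ ℕ and all z, w ∈ A, |S_N(√N z, √N w)| ≤ C. -/

import Mathlib

open MeasureTheory ProbabilityTheory Filter Topology ComplexConjugate

noncomputable section

/-- The open upper half of the unit disk `𝔻⁺`. -/
def upperHalfDisk : Set ℂ := {z : ℂ | ‖z‖ < 1 ∧ 0 < z.im}

/-- A (plane) domain: a nonempty connected open subset of `ℂ`. -/
def IsPlaneDomain (A : Set ℂ) : Prop := IsOpen A ∧ IsConnected A

/-- A domain is admissible if its closure is contained in the upper half disk. -/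
def IsAdmissible (A : Set ℂ) : Prop := closure A ⊆ upperHalfDisk

/-- `d_A`: the distance between `A` and the boundary of the upper half disk. -/
def dA (A : Set ℂ) : ℝ :=
  sInf {r : ℝ | ∃ z ∈ A, ∃ w ∈ frontier upperHalfDisk, r = dist z w}

/-- Lipschitz domain: near every boundary point, after a rigid motion of the plane,
the set coincides with the subgraph of a Lipschitz function. -/
def IsLipschitzDomain (A : Set ℂ) : Prop :=
  ∀ x ∈ frontier A, ∃ (φ : ℂ ≃ᵃⁱ[ℝ] ℂ) (K : NNReal) (f : ℝ → ℝ) (ε : ℝ),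
    0 < ε ∧ LipschitzWith K f ∧
      ∀ y ∈ Metric.ball x ε, (y ∈ A ↔ (φ y).im < f ((φ y).re))

/-- `ℓ(∂A)`: the one-dimensional Hausdorff measure of the boundary of `A`. -/
def boundaryLength (A : Set ℂ) : ℝ :=
  ((MeasureTheory.Measure.hausdorffMeasure 1 : Measure ℂ) (frontier A)).toReal

/-- The law of the `N × N` real Ginibre matrix: i.i.d. standard Gaussian entries,
realized on the canonical product space. -/
def ginibreMeasure (N : ℕ) : Measure ((Fin N × Fin N) → ℝ) :=
  Measure.pi fun _ => gaussianReal 0 1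

/-- The real Ginibre matrix `G_N` as a function of the sample point. -/
def ginibreMatrix (N : ℕ) (ω : (Fin N × Fin N) → ℝ) : Matrix (Fin N) (Fin N) ℝ :=
  Matrix.of fun i j => ω (i, j)

/-- `W_N = N^{-1/2} G_N`. -/
def Wmatrix (N : ℕ) (ω : (Fin N × Fin N) → ℝ) : Matrix (Fin N) (Fin N) ℝ :=
  (Real.sqrt N)⁻¹ • ginibreMatrix N ω

/-- The eigenvalues (with multiplicity) of a real matrix: the multiset of complex
roots of its characteristic polynomial. -/
def eigs {N : ℕ} (M : Matrix (Fin N) (Fin N) ℝ) : Multiset ℂ :=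
  (Matrix.charpoly (M.map fun x => (x : ℂ))).roots

/-- The number of eigenvalues of `M` lying in `A`, with multiplicity. -/
def countIn (A : Set ℂ) {N : ℕ} (M : Matrix (Fin N) (Fin N) ℝ) : ℕ :=
  letI := Classical.decPred fun z : ℂ => z ∈ A
  Multiset.countP (fun z => z ∈ A) (eigs M)

/-- The centered eigenvalue counting statistic `X_A` of `W_N`. -/
def XA (A : Set ℂ) (N : ℕ) (ω : (Fin N × Fin N) → ℝ) : ℝ :=
  (countIn A (Wmatrix N ω) : ℝ) -
    ∫ ω', (countIn A (Wmatrix N ω') : ℝ) ∂(ginibreMeasure N)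

/-- `s_N(z) = e^{-z} ∑_{j<N} z^j/j!`. -/
def sN (N : ℕ) (z : ℂ) : ℂ :=
  Complex.exp (-z) * ∑ j ∈ Finset.range N, z ^ j / (Nat.factorial j : ℂ)

/-- The complementary error function. -/
def erfc (x : ℝ) : ℝ := (2 / Real.sqrt Real.pi) * ∫ t in Set.Ioi x, Real.exp (-t ^ 2)

/-- `G(z,w) = √(erfc(√2 Im z) erfc(√2 Im w))`. -/
def Gker (z w : ℂ) : ℝ :=
  Real.sqrt (erfc (Real.sqrt 2 * z.im) * erfc (Real.sqrt 2 * w.im))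

/-- The kernel `S_N`. -/
def SN (N : ℕ) (z w : ℂ) : ℂ :=
  Complex.I * Complex.exp (-(1 / 2 : ℂ) * (z - conj w) ^ 2) / (Real.sqrt (2 * Real.pi) : ℂ) *
    (conj w - z) * (Gker z w : ℂ) * sN N (z * conj w)

/-- The kernel `D_N`. -/
def DN (N : ℕ) (z w : ℂ) : ℂ :=
  Complex.exp (-(1 / 2 : ℂ) * (z - w) ^ 2) / (Real.sqrt (2 * Real.pi) : ℂ) *
    (w - z) * (Gker z w : ℂ) * sN N (z * w)

/-- The kernel `I_N`. -/
def IN (N : ℕ) (z w : ℂ) : ℂ :=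
  Complex.exp (-(1 / 2 : ℂ) * (conj z - conj w) ^ 2) / (Real.sqrt (2 * Real.pi) : ℂ) *
    (conj z - conj w) * (Gker z w : ℂ) * sN N (conj z * conj w)

/-- The Pfaffian of a `2n × 2n` complex matrix, via the sum over permutations. -/
def Pf {n : ℕ} (M : Matrix (Fin (2 * n)) (Fin (2 * n)) ℂ) : ℂ :=
  (1 / (2 ^ n * (Nat.factorial n : ℂ))) *
    ∑ σ : Equiv.Perm (Fin (2 * n)),
      ((Equiv.Perm.sign σ : ℤ) : ℂ) *
        ∏ i : Fin n,
          M (σ ⟨2 * i.val, by have := i.isLt; omega⟩)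
            (σ ⟨2 * i.val + 1, by have := i.isLt; omega⟩)

/-- The `2 × 2` matrix kernel `K(z,w)`. -/
def Kmat (N : ℕ) (z w : ℂ) : Matrix (Fin 2) (Fin 2) ℂ :=
  !![DN N z w, SN N z w; -(SN N w z), IN N z w]

/-- The `2k × 2k` matrix assembled from the `2 × 2` blocks `K(z_i, z_j)`. -/
def blockK (N k : ℕ) (z : Fin k → ℂ) : Matrix (Fin (2 * k)) (Fin (2 * k)) ℂ :=
  Matrix.of fun p q =>
    Kmat N (z ⟨p.val / 2, by have := p.isLt; omega⟩) (z ⟨q.val / 2, by have := q.isLt; omega⟩)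
      ⟨p.val % 2, Nat.mod_lt _ (by omega)⟩ ⟨q.val % 2, Nat.mod_lt _ (by omega)⟩

/-- Cyclic successor on `Fin k` (so that `z_{k+1} = z_1`). -/
def cnext {k : ℕ} (i : Fin k) : Fin k := ⟨(i.val + 1) % k, Nat.mod_lt _ i.pos⟩

/-- `g(z,w) = Re(z) Im(w) - Re(w) Im(z)`. -/
def gfun (z w : ℂ) : ℝ := z.re * w.im - w.re * z.im

/-- The cyclic exponent `-(N/2) ∑ |z_i - z_{i+1}|² + iN ∑ g(z_i, z_{i+1})`. -/
def cycExp (N k : ℕ) (z : Fin k → ℂ) : ℂ :=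
  (Complex.ofReal (-((N : ℝ) / 2) * ∑ i : Fin k, ‖z i - z (cnext i)‖ ^ 2)) +
    Complex.I * (N : ℂ) * Complex.ofReal (∑ i : Fin k, gfun (z i) (z (cnext i)))

/-- `R_k = N^k ∫_{A^k} ∏_{i=1}^k S_N(√N z_i, √N z_{i+1}) dz`, with `z_{k+1} = z_1`. -/
def Rk (N k : ℕ) (A : Set ℂ) : ℂ :=
  (N : ℂ) ^ k *
    ∫ z : Fin k → ℂ in Set.univ.pi fun _ => A,
      ∏ i : Fin k, SN N ((Real.sqrt N : ℂ) * z i) ((Real.sqrt N : ℂ) * z (cnext i))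
      ∂(Measure.pi fun _ => volume)

/-- The sum of `f` over `k`-tuples of pairwise distinct indices of a multiset. -/
def tupleSum (k : ℕ) (s : Multiset ℂ) (f : (Fin k → ℂ) → ℝ) : ℝ :=
  ∑ t : Fin k ↪ Fin s.toList.length, f fun i => s.toList.get (t i)


/-! ### Auxiliary lemmas for `statement_3` -/

lemma aux_hasDerivAt_negexpsq (t : ℝ) :
    HasDerivAt (fun t : ℝ => -(Real.exp (-t ^ 2)) / 2) (t * Real.exp (-t ^ 2)) t := by
  have h1 : HasDerivAt (fun t : ℝ => -t ^ 2) (-(2 * t)) t := by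
    exact ((hasDerivAt_pow 2 t).neg).congr_deriv (by simp)
  have h2 := (h1.exp).neg.div_const 2
  exact h2.congr_deriv (by ring)

lemma aux_tendsto_negexpsq :
    Tendsto (fun t : ℝ => -(Real.exp (-t ^ 2)) / 2) atTop (𝓝 0) := by
  have h : Tendsto (fun t : ℝ => -t ^ 2) atTop atBot :=
    tendsto_neg_atTop_atBot.comp (tendsto_pow_atTop (by norm_num))
  have h2 : Tendsto (fun t : ℝ => Real.exp (-t ^ 2)) atTop (𝓝 0) :=
    Real.tendsto_exp_atBot.comp h
  have := h2.neg.div_const 2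
  simpa using this

lemma aux_integrableOn_mul_exp (x : ℝ) (hx : 0 < x) :
    IntegrableOn (fun t : ℝ => t * Real.exp (-t ^ 2)) (Set.Ioi x) := by
  exact integrableOn_Ioi_deriv_of_nonneg' (fun t _ => aux_hasDerivAt_negexpsq t)
    (fun t ht => mul_nonneg (hx.trans ht).le (Real.exp_pos _).le) aux_tendsto_negexpsq

lemma aux_integral_Ioi_mul_exp (x : ℝ) (hx : 0 < x) :
    ∫ t in Set.Ioi x, t * Real.exp (-t ^ 2) = Real.exp (-x ^ 2) / 2 := by
  have h := integral_Ioi_of_hasDerivAt_of_nonneg'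
    (fun t (_ : t ∈ Set.Ici x) => aux_hasDerivAt_negexpsq t)
    (fun t (ht : t ∈ Set.Ioi x) => mul_nonneg (hx.trans ht).le (Real.exp_pos _).le)
    aux_tendsto_negexpsq
  rw [h]; ring

lemma aux_integrableOn_exp_negsq (x : ℝ) :
    IntegrableOn (fun t : ℝ => Real.exp (-t ^ 2)) (Set.Ioi x) := by
  have := integrable_exp_neg_mul_sq (b := 1) one_pos
  simpa using this.integrableOn

lemma aux_erfc_nonneg (x : ℝ) : 0 ≤ erfc x := by
  unfold erfc
  apply mul_nonneg (by positivity)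
  exact setIntegral_nonneg measurableSet_Ioi fun t _ => (Real.exp_pos _).le

lemma aux_erfc_le (x : ℝ) (hx : 0 < x) :
    erfc x ≤ Real.exp (-x ^ 2) / (x * Real.sqrt Real.pi) := by
  have key : (∫ t in Set.Ioi x, Real.exp (-t ^ 2)) ≤
      ∫ t in Set.Ioi x, x⁻¹ * (t * Real.exp (-t ^ 2)) := by
    apply setIntegral_mono_on (aux_integrableOn_exp_negsq x)
      ((aux_integrableOn_mul_exp x hx).const_mul _) measurableSet_Ioi
    intro t ht
    have htx : x ≤ t := (Set.mem_Ioi.1 ht).le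
    rw [show x⁻¹ * (t * Real.exp (-t ^ 2)) = (x⁻¹ * t) * Real.exp (-t ^ 2) by ring]
    have h1 : (1 : ℝ) ≤ x⁻¹ * t := by
      rw [← inv_mul_cancel₀ hx.ne']
      exact mul_le_mul_of_nonneg_left htx (by positivity)
    nlinarith [Real.exp_pos (-t ^ 2)]
  have h2 : (∫ t in Set.Ioi x, x⁻¹ * (t * Real.exp (-t ^ 2)))
      = x⁻¹ * (Real.exp (-x ^ 2) / 2) := by
    rw [integral_const_mul, aux_integral_Ioi_mul_exp x hx]
  unfold erfc
  have hπ : 0 < Real.sqrt Real.pi := Real.sqrt_pos.2 Real.pi_pos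
  calc (2 / Real.sqrt Real.pi) * ∫ t in Set.Ioi x, Real.exp (-t ^ 2)
      ≤ (2 / Real.sqrt Real.pi) * (x⁻¹ * (Real.exp (-x ^ 2) / 2)) := by
        rw [← h2]; exact mul_le_mul_of_nonneg_left key (by positivity)
    _ = Real.exp (-x ^ 2) / (x * Real.sqrt Real.pi) := by
        field_simp

lemma aux_sN_abs_le (N : ℕ) (z : ℂ) :
    ‖sN N z‖ ≤ Real.exp (‖z‖ - z.re) := by
  unfold sN
  rw [norm_mul, Complex.norm_exp, Complex.neg_re, sub_eq_add_neg, Real.exp_add, mul_comm]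
  apply mul_le_mul_of_nonneg_right _ (Real.exp_pos _).le
  calc ‖∑ j ∈ Finset.range N, z ^ j / (Nat.factorial j : ℂ)‖
      ≤ ∑ j ∈ Finset.range N, ‖z ^ j / (Nat.factorial j : ℂ)‖ :=
        norm_sum_le _ _
    _ = ∑ j ∈ Finset.range N, (‖z‖) ^ j / (Nat.factorial j : ℝ) := by
        refine Finset.sum_congr rfl fun j _ => ?_
        rw [norm_div, norm_pow, Complex.norm_natCast]
    _ ≤ Real.exp (‖z‖) := Real.sum_le_exp_of_nonneg (norm_nonneg z) N

lemma aux_exponent_le (Z W : ℂ) :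
    (-(1 / 2 : ℂ) * (Z - conj W) ^ 2).re + (-(Z.im ^ 2 + W.im ^ 2))
      + (‖Z * conj W‖ - (Z * conj W).re) ≤ 0 := by
  have hZ : ‖Z‖ ^ 2 = Z.re ^ 2 + Z.im ^ 2 := by
    rw [Complex.sq_norm, Complex.normSq_apply]; ring
  have hW : ‖W‖ ^ 2 = W.re ^ 2 + W.im ^ 2 := by
    rw [Complex.sq_norm, Complex.normSq_apply]; ring
  have habsmul : ‖Z * conj W‖ = ‖Z‖ * ‖W‖ := by
    rw [norm_mul, Complex.norm_conj]
  have hre : (-(1 / 2 : ℂ) * (Z - conj W) ^ 2).re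
      = -(1 / 2) * ((Z.re - W.re) ^ 2 - (Z.im + W.im) ^ 2) := by
    simp [pow_two, Complex.mul_re, Complex.mul_im, Complex.sub_re, Complex.sub_im,
      Complex.conj_re, Complex.conj_im]
  have hre2 : (Z * conj W).re = Z.re * W.re + Z.im * W.im := by
    simp [Complex.mul_re, Complex.conj_re, Complex.conj_im]
  rw [hre, habsmul, hre2]
  nlinarith [sq_nonneg (‖Z‖ - ‖W‖), norm_nonneg Z,
    norm_nonneg W]

lemma aux_Gker_le (Z W : ℂ) (ha : 0 < Z.im) (hb : 0 < W.im) :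
    Gker Z W ≤ Real.exp (-(Z.im ^ 2 + W.im ^ 2))
      / Real.sqrt (2 * Real.pi * (Z.im * W.im)) := by
  have key : ∀ c : ℝ, 0 < c → erfc (Real.sqrt 2 * c)
      ≤ Real.exp (-(2 * c ^ 2)) / (Real.sqrt 2 * c * Real.sqrt Real.pi) := by
    intro c hc
    have h := aux_erfc_le (Real.sqrt 2 * c) (by positivity)
    have hsq : (Real.sqrt 2 * c) ^ 2 = 2 * c ^ 2 := by
      rw [mul_pow, Real.sq_sqrt (by norm_num : (2:ℝ) ≥ 0)]
    rwa [hsq] at h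
  have hprod : erfc (Real.sqrt 2 * Z.im) * erfc (Real.sqrt 2 * W.im)
      ≤ (Real.exp (-(Z.im ^ 2 + W.im ^ 2)) / Real.sqrt (2 * Real.pi * (Z.im * W.im))) ^ 2 := by
    have h := mul_le_mul (key Z.im ha) (key W.im hb) (aux_erfc_nonneg _) (by positivity)
    refine h.trans_eq ?_
    have hnum : Real.exp (-(2 * Z.im ^ 2)) * Real.exp (-(2 * W.im ^ 2))
        = Real.exp (-(Z.im ^ 2 + W.im ^ 2)) ^ 2 := by
      rw [← Real.exp_add, ← Real.exp_nat_mul]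
      congr 1
      push_cast
      ring
    have h2 : Real.sqrt 2 * Real.sqrt 2 = 2 := Real.mul_self_sqrt (by norm_num)
    have hp : Real.sqrt Real.pi * Real.sqrt Real.pi = Real.pi :=
      Real.mul_self_sqrt Real.pi_pos.le
    have hden : Real.sqrt 2 * Z.im * Real.sqrt Real.pi * (Real.sqrt 2 * W.im * Real.sqrt Real.pi)
        = 2 * Real.pi * (Z.im * W.im) := by
      calc Real.sqrt 2 * Z.im * Real.sqrt Real.pi * (Real.sqrt 2 * W.im * Real.sqrt Real.pi)
          = (Real.sqrt 2 * Real.sqrt 2) * (Real.sqrt Real.pi * Real.sqrt Real.pi)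
            * (Z.im * W.im) := by ring
        _ = 2 * Real.pi * (Z.im * W.im) := by rw [h2, hp]
    rw [div_mul_div_comm, hnum, hden, div_pow,
      Real.sq_sqrt (by positivity : (0:ℝ) ≤ 2 * Real.pi * (Z.im * W.im))]
  unfold Gker
  exact (Real.sqrt_le_sqrt hprod).trans_eq (Real.sqrt_sq (by positivity))

lemma aux_SN_abs_le (N : ℕ) (Z W : ℂ) (ha : 0 < Z.im) (hb : 0 < W.im) :
    ‖SN N Z W‖ ≤ (‖Z‖ + ‖W‖)
      / (2 * Real.pi * Real.sqrt (Z.im * W.im)) := by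
  have hG0 : 0 ≤ Gker Z W := Real.sqrt_nonneg _
  have habs : ‖SN N Z W‖
      = Real.exp ((-(1 / 2 : ℂ) * (Z - conj W) ^ 2).re) / Real.sqrt (2 * Real.pi)
        * ‖conj W - Z‖ * Gker Z W * ‖sN N (Z * conj W)‖ := by
    unfold SN
    rw [norm_mul, norm_mul, norm_mul, norm_div, norm_mul, Complex.norm_I, one_mul,
      Complex.norm_exp, Complex.norm_real, Complex.norm_real,
      Real.norm_of_nonneg (Real.sqrt_nonneg _), Real.norm_of_nonneg hG0]
  have hD : Real.sqrt (2 * Real.pi) * Real.sqrt (2 * Real.pi * (Z.im * W.im))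
      = 2 * Real.pi * Real.sqrt (Z.im * W.im) := by
    rw [← Real.sqrt_mul (by positivity)]
    have h : 2 * Real.pi * (2 * Real.pi * (Z.im * W.im))
        = (2 * Real.pi) ^ 2 * (Z.im * W.im) := by ring
    rw [h, Real.sqrt_mul (sq_nonneg _), Real.sqrt_sq (by positivity)]
  have htri : ‖conj W - Z‖ ≤ ‖W‖ + ‖Z‖ := by
    have h := norm_add_le (conj W) (-Z)
    simpa [sub_eq_add_neg, Complex.norm_conj] using h
  calc ‖SN N Z W‖
      = Real.exp ((-(1 / 2 : ℂ) * (Z - conj W) ^ 2).re) / Real.sqrt (2 * Real.pi)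
        * ‖conj W - Z‖ * Gker Z W * ‖sN N (Z * conj W)‖ := habs
    _ ≤ Real.exp ((-(1 / 2 : ℂ) * (Z - conj W) ^ 2).re) / Real.sqrt (2 * Real.pi)
        * (‖W‖ + ‖Z‖)
        * (Real.exp (-(Z.im ^ 2 + W.im ^ 2)) / Real.sqrt (2 * Real.pi * (Z.im * W.im)))
        * Real.exp (‖Z * conj W‖ - (Z * conj W).re) := by
        have h1 := aux_Gker_le Z W ha hb
        have h2 := aux_sN_abs_le N (Z * conj W)
        gcongr
    _ = Real.exp ((-(1 / 2 : ℂ) * (Z - conj W) ^ 2).re + (-(Z.im ^ 2 + W.im ^ 2))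
          + (‖Z * conj W‖ - (Z * conj W).re))
        * ((‖W‖ + ‖Z‖)
          / (Real.sqrt (2 * Real.pi) * Real.sqrt (2 * Real.pi * (Z.im * W.im)))) := by
        rw [Real.exp_add, Real.exp_add]; ring
    _ ≤ 1 * ((‖W‖ + ‖Z‖)
          / (Real.sqrt (2 * Real.pi) * Real.sqrt (2 * Real.pi * (Z.im * W.im)))) := by
        apply mul_le_mul_of_nonneg_right _ (by positivity)
        rw [Real.exp_le_one_iff]
        exact aux_exponent_le Z W
    _ = (‖Z‖ + ‖W‖) / (2 * Real.pi * Real.sqrt (Z.im * W.im)) := by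
        rw [one_mul, hD, add_comm]

lemma aux_isOpen_upperHalfDisk : IsOpen upperHalfDisk := by
  have h : upperHalfDisk = (fun z : ℂ => ‖z‖) ⁻¹' (Set.Iio 1) ∩ Complex.im ⁻¹' (Set.Ioi 0) := rfl
  rw [h]
  exact (isOpen_Iio.preimage continuous_norm).inter
    (isOpen_Ioi.preimage Complex.continuous_im)

lemma aux_mem_frontier_re {z : ℂ} (hz : z ∈ upperHalfDisk) :
    (z.re : ℂ) ∈ frontier upperHalfDisk := by
  rw [aux_isOpen_upperHalfDisk.frontier_eq]
  constructor
  · rw [Metric.mem_closure_iff]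
    intro ε hε
    set t : ℝ := min (ε / 2) z.im with ht
    have ht0 : 0 < t := lt_min (by linarith) hz.2
    refine ⟨(z.re : ℂ) + t * Complex.I, ⟨?_, ?_⟩, ?_⟩
    · have h1 : ‖(z.re : ℂ) + t * Complex.I‖ ^ 2 = z.re ^ 2 + t ^ 2 := by
        rw [Complex.sq_norm, Complex.normSq_apply]
        simp
        ring
      have h2 : ‖z‖ ^ 2 = z.re ^ 2 + z.im ^ 2 := by
        rw [Complex.sq_norm, Complex.normSq_apply]; ring
      have h3 : t ≤ z.im := min_le_right _ _
      have h4 : ‖z‖ < 1 := hz.1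
      nlinarith [norm_nonneg ((z.re : ℂ) + t * Complex.I), norm_nonneg z]
    · simp [ht0]
    · rw [Complex.dist_eq]
      have h : (z.re : ℂ) - ((z.re : ℂ) + t * Complex.I) = -(t * Complex.I) := by ring
      rw [h, norm_neg, norm_mul, Complex.norm_I, mul_one, Complex.norm_real,
        Real.norm_of_nonneg ht0.le]
      calc t ≤ ε / 2 := min_le_left _ _
        _ < ε := by linarith
  · intro h
    have : (0 : ℝ) < (z.re : ℂ).im := h.2
    simp at this

lemma aux_dist_re (z : ℂ) (hz : 0 < z.im) : dist z (z.re : ℂ) = z.im := by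
  rw [Complex.dist_eq]
  have h : z - (z.re : ℂ) = z.im * Complex.I := by
    apply Complex.ext <;> simp
  rw [h, norm_mul, Complex.norm_I, mul_one, Complex.norm_real, Real.norm_of_nonneg hz.le]

lemma aux_bddBelow_dA (A : Set ℂ) :
    BddBelow {r : ℝ | ∃ z ∈ A, ∃ w ∈ frontier upperHalfDisk, r = dist z w} := by
  refine ⟨0, fun r hr => ?_⟩
  obtain ⟨z, _, w, _, rfl⟩ := hr
  exact dist_nonneg

lemma aux_dA_le_im {A : Set ℂ} (hadm : IsAdmissible A) {z : ℂ} (hz : z ∈ A) : dA A ≤ z.im := by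
  have hz' : z ∈ upperHalfDisk := hadm (subset_closure hz)
  have hmem : z.im ∈ {r : ℝ | ∃ z ∈ A, ∃ w ∈ frontier upperHalfDisk, r = dist z w} :=
    ⟨z, hz, (z.re : ℂ), aux_mem_frontier_re hz', (aux_dist_re z hz'.2).symm⟩
  exact csInf_le (aux_bddBelow_dA A) hmem

lemma aux_dA_pos {A : Set ℂ} (hD : IsPlaneDomain A) (hadm : IsAdmissible A) : 0 < dA A := by
  obtain ⟨z₀, hz₀⟩ := hD.2.nonempty
  have hz₀' : z₀ ∈ upperHalfDisk := hadm (subset_closure hz₀)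
  set F := frontier upperHalfDisk
  have hFne : F.Nonempty := ⟨(z₀.re : ℂ), aux_mem_frontier_re hz₀'⟩
  have hKsub : closure A ⊆ Metric.closedBall 0 1 := by
    intro x hx
    have := (hadm hx).1
    rw [Metric.mem_closedBall]
    rw [show dist x 0 = ‖x‖ by simp [Complex.dist_eq]]
    exact this.le
  have hK : IsCompact (closure A) :=
    Metric.isCompact_of_isClosed_isBounded isClosed_closure
      (Metric.isBounded_closedBall.subset hKsub)
  obtain ⟨x₀, hx₀K, hmin⟩ := hK.exists_isMinOn ⟨z₀, subset_closure hz₀⟩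
    ((Metric.continuous_infDist_pt F).continuousOn)
  have hx₀F : x₀ ∉ F := by
    intro hx
    have h1 : x₀ ∈ upperHalfDisk := hadm hx₀K
    have hx' : x₀ ∈ frontier upperHalfDisk := hx
    rw [aux_isOpen_upperHalfDisk.frontier_eq] at hx'
    exact hx'.2 h1
  have hc : 0 < Metric.infDist x₀ F :=
    (isClosed_frontier.notMem_iff_infDist_pos hFne).1 hx₀F
  refine lt_of_lt_of_le hc (le_csInf ⟨_, z₀, hz₀, _, aux_mem_frontier_re hz₀', rfl⟩ ?_)
  rintro r ⟨z, hzA, w, hwF, rfl⟩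
  calc Metric.infDist x₀ F ≤ Metric.infDist z F := hmin (subset_closure hzA)
    _ ≤ dist z w := Metric.infDist_le_dist_of_mem hwF


/-- The kernel `S_N` is bounded on admissible domains, with a constant depending
only on `d_A`. -/
theorem statement_3 :
    ∃ C : ℝ → ℝ, ∀ A : Set ℂ, IsPlaneDomain A → IsAdmissible A →
      0 < C (dA A) ∧
        ∀ N : ℕ, 1 ≤ N → ∀ z ∈ A, ∀ w ∈ A,
          ‖SN N ((Real.sqrt N : ℂ) * z) ((Real.sqrt N : ℂ) * w)‖ ≤ C (dA A) := by
  refine ⟨fun d => max (1 / (Real.pi * d)) 1, fun A hD hadm => ?_⟩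
  have hd : 0 < dA A := aux_dA_pos hD hadm
  refine ⟨lt_of_lt_of_le one_pos (le_max_right _ _), ?_⟩
  intro N hN z hz w hw
  have hz' : z ∈ upperHalfDisk := hadm (subset_closure hz)
  have hw' : w ∈ upperHalfDisk := hadm (subset_closure hw)
  have hzd : dA A ≤ z.im := aux_dA_le_im hadm hz
  have hwd : dA A ≤ w.im := aux_dA_le_im hadm hw
  have hNpos : (0 : ℝ) < N := by exact_mod_cast hN
  have hs : 0 < Real.sqrt N := Real.sqrt_pos.2 hNpos
  set Z : ℂ := (Real.sqrt N : ℂ) * z with hZ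
  set W : ℂ := (Real.sqrt N : ℂ) * w with hW
  have hZim : Z.im = Real.sqrt N * z.im := by
    simp [hZ, Complex.mul_im]
  have hWim : W.im = Real.sqrt N * w.im := by
    simp [hW, Complex.mul_im]
  have hZim0 : 0 < Z.im := by rw [hZim]; exact mul_pos hs hz'.2
  have hWim0 : 0 < W.im := by rw [hWim]; exact mul_pos hs hw'.2
  have hmain := aux_SN_abs_le N Z W hZim0 hWim0
  have habsZ : ‖Z‖ = Real.sqrt N * ‖z‖ := by
    rw [hZ, norm_mul, Complex.norm_real, Real.norm_of_nonneg (Real.sqrt_nonneg _)]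
  have habsW : ‖W‖ = Real.sqrt N * ‖w‖ := by
    rw [hW, norm_mul, Complex.norm_real, Real.norm_of_nonneg (Real.sqrt_nonneg _)]
  have hnum : ‖Z‖ + ‖W‖ ≤ 2 * Real.sqrt N := by
    rw [habsZ, habsW]
    nlinarith [hz'.1, hw'.1, hs]
  have hsqrt : Real.sqrt (Z.im * W.im) = Real.sqrt N * Real.sqrt (z.im * w.im) := by
    have h : Z.im * W.im = (Real.sqrt N) ^ 2 * (z.im * w.im) := by
      rw [hZim, hWim]; ring
    rw [h, Real.sqrt_mul (sq_nonneg _), Real.sqrt_sq hs.le]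
  have hsqrtd : dA A ≤ Real.sqrt (z.im * w.im) := by
    have h1 : (dA A) ^ 2 ≤ z.im * w.im := by nlinarith
    calc dA A = Real.sqrt ((dA A) ^ 2) := (Real.sqrt_sq hd.le).symm
      _ ≤ Real.sqrt (z.im * w.im) := Real.sqrt_le_sqrt h1
  have hden : 2 * Real.pi * (Real.sqrt N * dA A) ≤ 2 * Real.pi * Real.sqrt (Z.im * W.im) := by
    rw [hsqrt]
    have := mul_le_mul_of_nonneg_left hsqrtd hs.le
    nlinarith [Real.pi_pos]
  have hden0 : 0 < 2 * Real.pi * (Real.sqrt N * dA A) := by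
    have := Real.pi_pos
    positivity
  have hfinal : (‖Z‖ + ‖W‖) / (2 * Real.pi * Real.sqrt (Z.im * W.im))
      ≤ 2 * Real.sqrt N / (2 * Real.pi * (Real.sqrt N * dA A)) :=
    div_le_div₀ (by positivity) hnum hden0 hden
  have heq : 2 * Real.sqrt N / (2 * Real.pi * (Real.sqrt N * dA A))
      = 1 / (Real.pi * dA A) := by
    have hne1 : 2 * Real.pi * (Real.sqrt N * dA A) ≠ 0 := hden0.ne'
    have hne2 : Real.pi * dA A ≠ 0 := by positivity
    rw [div_eq_div_iff hne1 hne2]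
    ring
  calc ‖SN N ((Real.sqrt N : ℂ) * z) ((Real.sqrt N : ℂ) * w)‖
      ≤ (‖Z‖ + ‖W‖) / (2 * Real.pi * Real.sqrt (Z.im * W.im)) := hmain
    _ ≤ 2 * Real.sqrt N / (2 * Real.pi * (Real.sqrt N * dA A)) := hfinal
    _ = 1 / (Real.pi * dA A) := heq
    _ ≤ max (1 / (Real.pi * dA A)) 1 := le_max_left _ _
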